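/- Let λ be a solution of the generalized characteristic equation and suppose μ := sup_{t ≥ t₀} ∫_0^r θ·|exp(−∫_{t−θ}^t λ(s) ds)| d‖η(t)‖(θ) < 1. Let x be a solution of the RFDE x'(t) = ∫_0^r x(t−θ) dη(t)(θ), and set y(t) = x(t)·exp(−∫_{t₀}^t λ(s) ds). If t* ≥ t₀ + r and A ≥ 0 are such that |y'(t)| ≤ A for all t ∈ [t*−r, t*], then |y'(t)| ≤ A·μ for all t ∈ [t*, t*+r]. -/

import Mathlib

open MeasureTheory Filter Topology

/- Context: for each `t ≥ t₀`, the complex measure `η t` on `[0, r]` is given in polar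
form `dη(t) = h t dν(t)`, where `ν t` is a finite (nonnegative) measure supported on
`[0, r]` and `‖h t θ‖ = 1` for `ν t`-a.e. `θ`; its total variation measure is then
`‖η t‖ = ν t`.  A solution of the RFDE `x'(t) = ∫_0^r x(t-θ) dη(t)(θ)` is a continuous
function on `[t₀ - r, ∞)`, differentiable on `[t₀, ∞)` (right derivative at `t₀`),
satisfying the equation there; `λ` is a solution of the generalized characteristic
equation `λ(t) = ∫_0^r exp(-∫_{t-θ}^t λ(s) ds) dη(t)(θ)`. -/
set_option maxHeartbeats 4000000 in
theorem stmt5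
    (r t₀ : ℝ) (hr : 0 < r)
    (ν : ℝ → Measure ℝ)
    (hfin : ∀ t, t₀ ≤ t → IsFiniteMeasure (ν t))
    (hsupp : ∀ t, t₀ ≤ t → ν t (Set.Icc 0 r)ᶜ = 0)
    (h : ℝ → ℝ → ℂ)
    (hh : ∀ t, t₀ ≤ t → ∀ᵐ θ ∂(ν t), ‖h t θ‖ = 1)
    -- λ is a solution of the generalized characteristic equation
    (lam : ℝ → ℂ)
    (hlamc : ContinuousOn lam (Set.Ici (t₀ - r)))
    (hlamint : ∀ t, t₀ ≤ t → IntegrableOn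
      (fun θ => Complex.exp (-(∫ s in (t - θ)..t, lam s)) * h t θ) (Set.Icc 0 r) (ν t))
    (hlam : ∀ t, t₀ ≤ t →
      lam t = ∫ θ in Set.Icc 0 r, Complex.exp (-(∫ s in (t - θ)..t, lam s)) * h t θ ∂(ν t))
    -- μ = sup_{t ≥ t₀} ∫_0^r θ ‖exp(-∫_{t-θ}^t λ)‖ d‖η t‖(θ) < 1
    (μ : ℝ) (hμ0 : 0 ≤ μ) (hμ1 : μ < 1)
    (hμ : ∀ t, t₀ ≤ t → (∫ θ in Set.Icc 0 r,
      θ * ‖Complex.exp (-(∫ s in (t - θ)..t, lam s))‖ ∂(ν t)) ≤ μ)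
    -- x is a solution of the RFDE
    (x : ℝ → ℂ)
    (hxc : ContinuousOn x (Set.Ici (t₀ - r)))
    (hxint : ∀ t, t₀ ≤ t →
      IntegrableOn (fun θ => x (t - θ) * h t θ) (Set.Icc 0 r) (ν t))
    (hx : ∀ t, t₀ ≤ t → HasDerivWithinAt x
      (∫ θ in Set.Icc 0 r, x (t - θ) * h t θ ∂(ν t)) (Set.Ici t₀) t)
    -- y' is the derivative of y(t) = x(t)·exp(-∫_{t₀}^t λ(s) ds) on [t₀, ∞)
    (y' : ℝ → ℂ)
    (hy' : ∀ t, t₀ ≤ t → HasDerivWithinAt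
      (fun u => x u * Complex.exp (-(∫ s in t₀..u, lam s))) (y' t) (Set.Ici t₀) t)
    (tstar A : ℝ) (htstar : t₀ + r ≤ tstar) (hA : 0 ≤ A)
    (hyA : ∀ t ∈ Set.Icc (tstar - r) tstar, ‖y' t‖ ≤ A) :
    ∀ t ∈ Set.Icc tstar (tstar + r), ‖y' t‖ ≤ A * μ := by
  set y : ℝ → ℂ := fun u => x u * Complex.exp (-(∫ s in t₀..u, lam s)) with hy_def
  have hts0 : t₀ ≤ tstar := by linarith
  -- interval integrability of lam on subintervals of [t₀ - r, ∞)
  have hii : ∀ a b : ℝ, t₀ - r ≤ a → t₀ - r ≤ b → IntervalIntegrable lam volume a b := by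
    intro a b ha hb
    apply ContinuousOn.intervalIntegrable (hlamc.mono ?_)
    intro u hu
    rw [Set.mem_uIcc] at hu
    rcases hu with ⟨h1, _⟩ | ⟨h1, _⟩ <;> simp only [Set.mem_Ici] <;> linarith
  have hsplit : ∀ a b c : ℝ, t₀ - r ≤ a → t₀ - r ≤ b → t₀ - r ≤ c →
      (∫ s in a..b, lam s) + (∫ s in b..c, lam s) = ∫ s in a..c, lam s := fun a b c ha hb hc =>
    intervalIntegral.integral_add_adjacent_intervals (hii a b ha hb) (hii b c hb hc)
  have hEmul : ∀ t θ : ℝ, t₀ ≤ t → θ ∈ Set.Icc 0 r →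
      Complex.exp (-(∫ s in t₀..t, lam s))
        = Complex.exp (-(∫ s in (t - θ)..t, lam s)) * Complex.exp (-(∫ s in t₀..(t - θ), lam s)) := by
    intro t θ ht hθ
    rw [← Complex.exp_add]
    have hs := hsplit t₀ (t - θ) t (by linarith) (by linarith [hθ.2]) (by linarith)
    congr 1
    linear_combination hs
  -- the primitive of lam and continuity of y
  have hprim : ContinuousOn (fun u => ∫ s in (t₀ - r)..u, lam s)
      (Set.Icc (t₀ - r) (tstar + r)) := by
    have h1 : IntegrableOn lam (Set.uIcc (t₀ - r) (tstar + r)) volume := by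
      rw [Set.uIcc_of_le (by linarith)]
      exact ContinuousOn.integrableOn_compact isCompact_Icc (hlamc.mono (fun u hu => hu.1))
    have h2 := intervalIntegral.continuousOn_primitive_interval h1
    rwa [Set.uIcc_of_le (show t₀ - r ≤ tstar + r by linarith)] at h2
  have hintsub : ∀ a b : ℝ, t₀ - r ≤ a → t₀ - r ≤ b →
      (∫ s in a..b, lam s) = (∫ s in (t₀ - r)..b, lam s) - (∫ s in (t₀ - r)..a, lam s) :=
    fun a b ha hb =>
      (intervalIntegral.integral_interval_sub_left (hii _ _ le_rfl hb) (hii _ _ le_rfl ha)).symm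
  have hyc : ContinuousOn y (Set.Icc (t₀ - r) (tstar + r)) := by
    rw [hy_def]
    apply ContinuousOn.mul (hxc.mono (fun u hu => hu.1))
    have h2 : ContinuousOn (fun u => Complex.exp
        (-((∫ s in (t₀ - r)..u, lam s) - (∫ s in (t₀ - r)..t₀, lam s))))
        (Set.Icc (t₀ - r) (tstar + r)) :=
      Complex.continuous_exp.comp_continuousOn (hprim.sub continuousOn_const).neg
    apply h2.congr
    intro u hu
    dsimp only
    rw [hintsub t₀ u (by linarith) hu.1]
  -- key estimate E1
  have keyE1 : ∀ t, t₀ ≤ t → t ≤ tstar + r → ∀ C : ℝ, 0 ≤ C →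
      (∀ θ ∈ Set.Icc (0:ℝ) r, ‖y (t - θ) - y t‖ ≤ C * θ) → ‖y' t‖ ≤ μ * C := by
    intro t ht htu C hC hquot
    haveI := hfin t ht
    have hlamt := hlam t ht
    have hμt := hμ t ht
    have hht := hh t ht
    have hintx := hxint t ht
    have hintlam := hlamint t ht
    have hF : HasDerivAt (fun u => ∫ s in t₀..u, lam s) (lam t) t := by
      apply intervalIntegral.integral_hasDerivAt_right (hii t₀ t (by linarith) (by linarith))
      · exact ⟨Set.Ici (t₀ - r), Ici_mem_nhds (by linarith),
          hlamc.aestronglyMeasurable measurableSet_Ici⟩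
      · exact hlamc.continuousAt (Ici_mem_nhds (by linarith))
    have hE : HasDerivAt (fun u => Complex.exp (-(∫ s in t₀..u, lam s)))
        (Complex.exp (-(∫ s in t₀..t, lam s)) * -(lam t)) t := hF.neg.cexp
    have hyd : HasDerivWithinAt y
        ((∫ θ in Set.Icc 0 r, x (t - θ) * h t θ ∂ν t) * Complex.exp (-(∫ s in t₀..t, lam s))
          + x t * (Complex.exp (-(∫ s in t₀..t, lam s)) * -(lam t))) (Set.Ici t₀) t := by
      rw [hy_def]
      exact (hx t ht).mul hE.hasDerivWithinAt
    have huniq : y' t = (∫ θ in Set.Icc 0 r, x (t - θ) * h t θ ∂ν t)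
        * Complex.exp (-(∫ s in t₀..t, lam s))
        + x t * (Complex.exp (-(∫ s in t₀..t, lam s)) * -(lam t)) :=
      UniqueDiffWithinAt.eq_deriv _ (uniqueDiffOn_Ici t₀ t (Set.mem_Ici.2 ht)) (hy' t ht) hyd
    have hcong : Set.EqOn
        (fun θ => Complex.exp (-(∫ s in (t - θ)..t, lam s)) * (y (t - θ) - y t) * h t θ)
        (fun θ => Complex.exp (-(∫ s in t₀..t, lam s)) * (x (t - θ) * h t θ)
          - Complex.exp (-(∫ s in t₀..t, lam s))
            * (x t * (Complex.exp (-(∫ s in (t - θ)..t, lam s)) * h t θ)))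
        (Set.Icc 0 r) := by
      intro θ hθ
      have hm := hEmul t θ ht hθ
      simp only [hy_def]
      rw [hm]
      ring
    have hint2 : IntegrableOn (fun θ => Complex.exp (-(∫ s in t₀..t, lam s))
        * (x (t - θ) * h t θ)) (Set.Icc 0 r) (ν t) := hintx.const_mul _
    have hint3 : IntegrableOn (fun θ => Complex.exp (-(∫ s in t₀..t, lam s))
        * (x t * (Complex.exp (-(∫ s in (t - θ)..t, lam s)) * h t θ)))
        (Set.Icc 0 r) (ν t) := (hintlam.const_mul (x t)).const_mul _
    have hform : y' t = ∫ θ in Set.Icc 0 r,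
        Complex.exp (-(∫ s in (t - θ)..t, lam s)) * (y (t - θ) - y t) * h t θ ∂ν t := by
      rw [MeasureTheory.setIntegral_congr_fun measurableSet_Icc hcong,
        MeasureTheory.integral_sub hint2 hint3, MeasureTheory.integral_const_mul,
        MeasureTheory.integral_const_mul, MeasureTheory.integral_const_mul, ← hlamt, huniq]
      ring
    rw [hform]
    have hecont : ContinuousOn (fun θ : ℝ => Complex.exp (-(∫ s in (t - θ)..t, lam s)))
        (Set.Icc 0 r) := by
      have hGtθ : ContinuousOn (fun θ : ℝ => ∫ s in (t₀ - r)..(t - θ), lam s) (Set.Icc 0 r) := by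
        have hcts : Continuous (fun θ : ℝ => t - θ) := continuous_const.sub continuous_id
        have := ContinuousOn.comp (g := fun u => ∫ s in (t₀ - r)..u, lam s)
          (f := fun θ : ℝ => t - θ) (s := Set.Icc 0 r) (t := Set.Icc (t₀ - r) (tstar + r))
          hprim hcts.continuousOn
          (fun θ hθ => by
            show t - θ ∈ Set.Icc (t₀ - r) (tstar + r)
            exact Set.mem_Icc.2 ⟨by linarith [(Set.mem_Icc.1 hθ).2],
              by linarith [(Set.mem_Icc.1 hθ).1]⟩)
        exact this
      apply Complex.continuous_exp.comp_continuousOn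
      apply ContinuousOn.neg
      apply (continuousOn_const.sub hGtθ).congr
      intro θ hθ
      exact hintsub (t - θ) t (by linarith [hθ.2]) (by linarith)
    have hgint : IntegrableOn
        (fun θ : ℝ => C * (θ * ‖Complex.exp (-(∫ s in (t - θ)..t, lam s))‖))
        (Set.Icc 0 r) (ν t) := by
      apply ContinuousOn.integrableOn_compact isCompact_Icc
      exact continuousOn_const.mul (continuousOn_id.mul hecont.norm)
    have hbound : ∀ᵐ θ ∂(ν t).restrict (Set.Icc 0 r),
        ‖Complex.exp (-(∫ s in (t - θ)..t, lam s)) * (y (t - θ) - y t) * h t θ‖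
          ≤ C * (θ * ‖Complex.exp (-(∫ s in (t - θ)..t, lam s))‖) := by
      filter_upwards [MeasureTheory.ae_restrict_of_ae hht,
        MeasureTheory.ae_restrict_mem measurableSet_Icc] with θ h1 h2
      rw [norm_mul, norm_mul, h1, mul_one]
      have h3 := hquot θ h2
      have h4 : (0:ℝ) ≤ ‖Complex.exp (-(∫ s in (t - θ)..t, lam s))‖ := norm_nonneg _
      nlinarith
    calc ‖∫ θ in Set.Icc 0 r,
          Complex.exp (-(∫ s in (t - θ)..t, lam s)) * (y (t - θ) - y t) * h t θ ∂ν t‖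
        ≤ ∫ θ in Set.Icc 0 r, C * (θ * ‖Complex.exp (-(∫ s in (t - θ)..t, lam s))‖) ∂ν t :=
          MeasureTheory.norm_integral_le_of_norm_le hgint hbound
      _ = C * ∫ θ in Set.Icc 0 r, θ * ‖Complex.exp (-(∫ s in (t - θ)..t, lam s))‖ ∂ν t :=
          MeasureTheory.integral_const_mul _ _
      _ ≤ C * μ := mul_le_mul_of_nonneg_left hμt hC
      _ = μ * C := mul_comm _ _
  -- mean value inequality (E2)
  have keyE2 : ∀ a b C : ℝ, t₀ ≤ a → a ≤ b → b ≤ tstar + r → 0 ≤ C →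
      (∀ s ∈ Set.Ico a b, ‖y' s‖ ≤ C) → ‖y b - y a‖ ≤ C * (b - a) := by
    intro a b C ha hab hbu hC hbd
    rcases eq_or_lt_of_le hab with rfl | hab'
    · simp
    have key : ∀ b' ∈ Set.Ico a b, ‖y b' - y a‖ ≤ C * (b' - a) := by
      intro b' hb'
      have hder : ∀ u ∈ Set.Icc a b', HasDerivWithinAt y (y' u) (Set.Icc a b') u :=
        fun u hu => (hy' u (ha.trans hu.1)).mono (fun v hv => ha.trans hv.1)
      have hbnd : ∀ u ∈ Set.Icc a b', ‖y' u‖ ≤ C :=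
        fun u hu => hbd u ⟨hu.1, lt_of_le_of_lt hu.2 hb'.2⟩
      have := (convex_Icc a b').norm_image_sub_le_of_norm_hasDerivWithin_le hder hbnd
        (Set.left_mem_Icc.2 hb'.1) (Set.right_mem_Icc.2 hb'.1)
      rwa [Real.norm_eq_abs, abs_of_nonneg (by linarith [hb'.1])] at this
    have hmem : b ∈ Set.Icc (t₀ - r) (tstar + r) := ⟨by linarith, hbu⟩
    have hcw : ContinuousWithinAt y (Set.Ico a b) b := by
      apply (hyc b hmem).mono
      intro v hv
      have hv1 := hv.1
      have hv2 := hv.2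
      exact Set.mem_Icc.2 ⟨by linarith, by linarith⟩
    have h1 : Tendsto (fun b' => ‖y b' - y a‖) (𝓝[Set.Ico a b] b) (𝓝 ‖y b - y a‖) :=
      (hcw.sub tendsto_const_nhds).norm
    have h2 : Tendsto (fun b' => C * (b' - a)) (𝓝[Set.Ico a b] b) (𝓝 (C * (b - a))) :=
      (((continuous_id.sub continuous_const).tendsto b).mono_left nhdsWithin_le_nhds).const_mul C
    haveI hne : (𝓝[Set.Ico a b] b).NeBot :=
      mem_closure_iff_nhdsWithin_neBot.1 (by
        rw [closure_Ico hab'.ne]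
        exact Set.mem_Icc.2 ⟨hab, le_rfl⟩)
    exact le_of_tendsto_of_tendsto h1 h2 (eventually_mem_nhdsWithin.mono key)
  -- mean value theorem (E3)
  have keyE3 : ∀ a b : ℝ, t₀ ≤ a → a < b → b ≤ tstar + r →
      ∃ ξ ∈ Set.Ioo a b, ‖y b - y a‖ ≤ ‖y' ξ‖ * (b - a) := by
    intro a b ha hab hbu
    by_cases hΔ : y b - y a = 0
    · refine ⟨(a + b) / 2, ⟨by linarith, by linarith⟩, ?_⟩
      rw [hΔ, norm_zero]
      have hba : (0:ℝ) < b - a := by linarith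
      positivity
    · set Δ : ℂ := y b - y a with hΔdef
      set g : ℝ → ℝ := fun u => ((starRingEnd ℂ) Δ * y u).re with hgdef
      have hgc : ContinuousOn g (Set.Icc a b) := by
        apply Complex.continuous_re.comp_continuousOn
        apply continuousOn_const.mul
        apply hyc.mono
        intro v hv
        exact Set.mem_Icc.2 ⟨by linarith [hv.1], by linarith [hv.2]⟩
      have hder : ∀ u ∈ Set.Ioo a b, HasDerivAt g (((starRingEnd ℂ) Δ * y' u).re) u := by
        intro u hu
        have hu0 : t₀ < u := lt_of_le_of_lt ha hu.1
        have hd1 : HasDerivAt y (y' u) u := (hy' u hu0.le).hasDerivAt (Ici_mem_nhds hu0)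
        have hd2 : HasDerivAt (fun v => (starRingEnd ℂ) Δ * y v) ((starRingEnd ℂ) Δ * y' u) u :=
          hd1.const_mul _
        exact Complex.reCLM.hasFDerivAt.comp_hasDerivAt u hd2
      obtain ⟨ξ, hξ, hslope⟩ := exists_hasDerivAt_eq_slope g _ hab hgc hder
      refine ⟨ξ, hξ, ?_⟩
      have hgba : g b - g a = ‖Δ‖ ^ 2 := by
        have h3 : g b - g a = ((starRingEnd ℂ) Δ * Δ).re := by
          simp only [hgdef]
          rw [← Complex.sub_re, ← mul_sub, ← hΔdef]
        rw [h3, ← Complex.normSq_eq_conj_mul_self, Complex.ofReal_re, ← Complex.sq_norm]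
      have hslope2 : g b - g a = ((starRingEnd ℂ) Δ * y' ξ).re * (b - a) := by
        rw [hslope, div_mul_cancel₀ _ (sub_ne_zero.2 hab.ne')]
      have hre : ((starRingEnd ℂ) Δ * y' ξ).re ≤ ‖Δ‖ * ‖y' ξ‖ := by
        have h4 := Complex.re_le_norm ((starRingEnd ℂ) Δ * y' ξ)
        rw [norm_mul, RCLike.norm_conj] at h4
        exact h4
      have hΔpos : (0:ℝ) < ‖Δ‖ := norm_pos_iff.2 hΔ
      have h5 : ‖Δ‖ ^ 2 ≤ (‖Δ‖ * ‖y' ξ‖) * (b - a) := by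
        rw [← hgba, hslope2]
        have hba : (0:ℝ) < b - a := by linarith
        nlinarith
      nlinarith
  -- pointwise differentiability bound
  have hdiffbd : ∀ w, t₀ ≤ w → ∃ Cw δw : ℝ, 0 < Cw ∧ 0 < δw ∧
      ∀ v, t₀ ≤ v → |v - w| < δw → ‖y v - y w‖ ≤ Cw * |v - w| := by
    intro w hw
    have h1 := ((hy' w hw).hasFDerivWithinAt).isBigO_sub
    obtain ⟨c, hc0, hc⟩ := h1.exists_pos
    have hc2 := hc.bound
    rw [Filter.eventually_iff, Metric.mem_nhdsWithin_iff] at hc2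
    obtain ⟨ε, hε, hsub⟩ := hc2
    refine ⟨c, ε, hc0, hε, ?_⟩
    intro v hv hdist
    have hmem : v ∈ Metric.ball w ε ∩ Set.Ici t₀ := ⟨by rwa [Metric.mem_ball, Real.dist_eq], hv⟩
    have h6 := hsub hmem
    simp only [Set.mem_setOf_eq] at h6
    rwa [Real.norm_eq_abs] at h6
  -- self-improvement: a bound on [tstar, s] improves to μ * A
  have keySI : ∀ s, tstar ≤ s → s ≤ tstar + r → ∀ M : ℝ,
      (∀ v ∈ Set.Icc tstar s, ‖y' v‖ ≤ M) → ∀ v ∈ Set.Icc tstar s, ‖y' v‖ ≤ μ * A := by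
    intro s hs1 hs2 M hM
    have hM0 : 0 ≤ M := le_trans (norm_nonneg _) (hM tstar ⟨le_rfl, hs1⟩)
    have step : ∀ c : ℝ, 0 ≤ c → (∀ v ∈ Set.Icc tstar s, ‖y' v‖ ≤ c) →
        ∀ v ∈ Set.Icc tstar s, ‖y' v‖ ≤ μ * max A c := by
      intro c hc hcb v hv
      have hv1 := hv.1
      have hv2 := hv.2
      apply keyE1 v (by linarith) (by linarith) _ (le_max_iff.2 (Or.inl hA))
      intro θ hθ
      have hθ1 := hθ.1
      have hθ2 := hθ.2
      rcases le_or_gt (v - θ) tstar with hcase | hcase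
      · have hb1 : ‖y tstar - y (v - θ)‖ ≤ A * (tstar - (v - θ)) := by
          apply keyE2 (v - θ) tstar A (by linarith) (by linarith) (by linarith) hA
          intro s' hs'
          exact hyA s' ⟨by linarith [hs'.1], hs'.2.le⟩
        have hb2 : ‖y v - y tstar‖ ≤ c * (v - tstar) := by
          apply keyE2 tstar v c hts0 hv1 (by linarith) hc
          intro s' hs'
          exact hcb s' ⟨hs'.1, by linarith [hs'.2]⟩
        have htri : ‖y (v - θ) - y v‖ ≤ ‖y tstar - y (v - θ)‖ + ‖y v - y tstar‖ := by
          have heq : y (v - θ) - y v = -((y tstar - y (v - θ)) + (y v - y tstar)) := by ring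
          rw [heq, norm_neg]
          exact norm_add_le _ _
        have hmax1 : A ≤ max A c := le_max_left _ _
        have hmax2 : c ≤ max A c := le_max_right _ _
        nlinarith
      · have hb2 : ‖y v - y (v - θ)‖ ≤ c * (v - (v - θ)) := by
          apply keyE2 (v - θ) v c (by linarith) (by linarith) (by linarith) hc
          intro s' hs'
          exact hcb s' ⟨by linarith [hs'.1], by linarith [hs'.2]⟩
        rw [norm_sub_rev]
        have hmax2 : c ≤ max A c := le_max_right _ _
        nlinarith
    have iter : ∀ k : ℕ, ∀ v ∈ Set.Icc tstar s, ‖y' v‖ ≤ max (μ * A) (μ ^ k * M) := by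
      intro k
      induction k with
      | zero =>
        intro v hv
        have := hM v hv
        simp only [pow_zero, one_mul]
        exact le_max_of_le_right this
      | succ k ih =>
        intro v hv
        have hck : (0:ℝ) ≤ max (μ * A) (μ ^ k * M) := by positivity
        have h1 := step (max (μ * A) (μ ^ k * M)) hck ih v hv
        apply le_trans h1
        have h2 : max A (max (μ * A) (μ ^ k * M)) ≤ max A (μ ^ k * M) := by
          apply max_le (le_max_left _ _)
          apply max_le _ (le_max_right _ _)
          apply le_max_of_le_left
          nlinarith
        have h3 : μ * max A (max (μ * A) (μ ^ k * M)) ≤ μ * max A (μ ^ k * M) :=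
          mul_le_mul_of_nonneg_left h2 hμ0
        apply le_trans h3
        rw [mul_max_of_nonneg _ _ hμ0]
        apply max_le_max le_rfl
        rw [pow_succ]
        exact le_of_eq (by ring)
    intro v hv
    by_contra hcon
    push_neg at hcon
    have hpos : 0 < ‖y' v‖ := lt_of_le_of_lt (by positivity) hcon
    have hlim : Tendsto (fun k : ℕ => μ ^ k * M) atTop (𝓝 0) := by
      have := (tendsto_pow_atTop_nhds_zero_of_lt_one hμ0 hμ1).mul_const M
      simpa using this
    have hev : ∀ᶠ k : ℕ in atTop, μ ^ k * M < ‖y' v‖ :=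
      hlim.eventually_lt_const hpos
    obtain ⟨k, hk⟩ := hev.exists
    have := iter k v hv
    exact absurd this (not_le.2 (max_lt hcon hk))
  -- main argument
  intro t htmem
  by_contra hcon
  push_neg at hcon
  set T : Set ℝ := {u | u ∈ Set.Icc tstar (tstar + r) ∧
    ∀ M : ℝ, ∃ s ∈ Set.Icc tstar u, M < ‖y' s‖} with hT_def
  have htT : t ∈ T := by
    refine ⟨htmem, ?_⟩
    intro M
    by_contra hM
    push_neg at hM
    have := keySI t htmem.1 htmem.2 M hM t ⟨htmem.1, le_rfl⟩
    rw [mul_comm] at this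
    linarith
  have hTne : T.Nonempty := ⟨t, htT⟩
  have hTbdd : BddBelow T := ⟨tstar, fun u hu => hu.1.1⟩
  set t₂ := sInf T with ht₂def
  have ht₂l : tstar ≤ t₂ := le_csInf hTne (fun u hu => hu.1.1)
  have ht₂u : t₂ ≤ tstar + r := le_trans (csInf_le hTbdd htT) htmem.2
  have hbb : ∀ s, tstar ≤ s → s < t₂ → ∃ M, ∀ v ∈ Set.Icc tstar s, ‖y' v‖ ≤ M := by
    intro s hs1 hs2
    by_contra hno
    push_neg at hno
    have hsT : s ∈ T := ⟨⟨hs1, by linarith⟩, hno⟩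
    exact absurd (csInf_le hTbdd hsT) (not_le.2 hs2)
  have hA_before : ∀ v, tstar - r ≤ v → v < t₂ → ‖y' v‖ ≤ A := by
    intro v hv1 hv2
    rcases le_or_gt v tstar with hv3 | hv3
    · exact hyA v ⟨hv1, hv3⟩
    · obtain ⟨M, hM⟩ := hbb v hv3.le hv2
      have := keySI v hv3.le (by linarith) M hM v ⟨hv3.le, le_rfl⟩
      nlinarith
  obtain ⟨C₁, δ₁, hC₁pos, hδ₁pos, hC₁⟩ := hdiffbd t₂ (by linarith)
  set C₂ : ℝ := max (A + C₁) 1 with hC₂def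
  have hC₂1 : (1:ℝ) ≤ C₂ := le_max_right _ _
  have hC₂A : A + C₁ ≤ C₂ := le_max_left _ _
  set μ₁ : ℝ := max μ (1/2) with hμ₁def
  have hμ₁pos : (0:ℝ) < μ₁ := lt_of_lt_of_le (by norm_num) (le_max_right _ _)
  have hμ₁lt : μ₁ < 1 := max_lt hμ1 (by norm_num)
  have hμμ₁ : μ ≤ μ₁ := le_max_left _ _
  set ρ : ℝ := (1 + μ₁) / (2 * μ₁) with hρdef
  have hρ0 : (0:ℝ) < ρ := by
    rw [hρdef]
    positivity
  have hρ1 : 1 < ρ := by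
    rw [hρdef, lt_div_iff₀ (by positivity)]
    linarith
  have hbad : ∀ δ : ℝ, 0 < δ → ∀ M : ℝ, ∃ u, t₂ < u ∧ u < t₂ + δ ∧ u ≤ tstar + r ∧ M < ‖y' u‖ := by
    intro δ hδ M
    obtain ⟨t₃, ht₃T, ht₃lt⟩ : ∃ t₃ ∈ T, t₃ < t₂ + δ := by
      by_contra hno
      push_neg at hno
      have := le_csInf hTne hno
      linarith
    obtain ⟨s, hsmem, hslt⟩ := ht₃T.2 (max M (max A ‖y' t₂‖))
    have hs2 : t₂ < s := by
      by_contra hs3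
      push_neg at hs3
      rcases eq_or_lt_of_le hs3 with rfl | hs4
      · exact absurd hslt (not_lt.2 (le_trans (le_max_right _ _) (le_max_right _ _)))
      · have := hA_before s (by linarith [hsmem.1]) hs4
        exact absurd hslt (not_lt.2 (le_trans this (le_trans (le_max_left _ _)
          (le_max_right _ _))))
    exact ⟨s, hs2, lt_of_le_of_lt hsmem.2 ht₃lt, le_trans hsmem.2 ht₃T.1.2,
      lt_of_le_of_lt (le_max_left _ _) hslt⟩
  -- one step of the blow-up construction
  have stepLem : ∀ u, t₂ < u → u < t₂ + δ₁ → u ≤ tstar + r → C₂ < ‖y' u‖ →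
      ∃ vθ : ℝ × ℝ, (t₂ < vθ.1 ∧ vθ.1 < t₂ + δ₁ ∧ vθ.1 ≤ tstar + r ∧ C₂ < ‖y' vθ.1‖) ∧
        0 < vθ.2 ∧ t₂ < u - vθ.2 ∧ u - vθ.2 < vθ.1 ∧ vθ.1 < u ∧
        ρ * ‖y' u‖ < ‖y' vθ.1‖ ∧ (ρ * ‖y' u‖) * vθ.2 < ‖y (u - vθ.2) - y u‖ := by
    intro u hu1 hu2 hu3 hu4
    have hu0 : t₀ ≤ u := by linarith
    have hfu : (0:ℝ) < ‖y' u‖ := lt_trans (lt_of_lt_of_le zero_lt_one hC₂1) hu4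
    have hKfu : ‖y' u‖ ≤ ρ * ‖y' u‖ := le_mul_of_one_le_left hfu.le hρ1.le
    have hK0 : (0:ℝ) ≤ ρ * ‖y' u‖ := mul_nonneg hρ0.le (norm_nonneg _)
    have hμK : μ * (ρ * ‖y' u‖) < ‖y' u‖ := by
      have hh1 : μ * (ρ * ‖y' u‖) ≤ μ₁ * (ρ * ‖y' u‖) := by nlinarith
      have hh2 : μ₁ * ρ = (1 + μ₁) / 2 := by
        rw [hρdef]
        field_simp
      have hh3 : μ₁ * (ρ * ‖y' u‖) = ((1 + μ₁) / 2) * ‖y' u‖ := by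
        rw [← hh2]; ring
      nlinarith
    have hex : ∃ θ ∈ Set.Icc (0:ℝ) r, (ρ * ‖y' u‖) * θ < ‖y (u - θ) - y u‖ := by
      by_contra hno
      push_neg at hno
      have := keyE1 u hu0 hu3 (ρ * ‖y' u‖) hK0 (fun θ hθ => by
        have := hno θ hθ
        linarith)
      linarith
    obtain ⟨θ, hθmem, hθq⟩ := hex
    have hθ0 : 0 < θ := by
      rcases eq_or_lt_of_le hθmem.1 with h0 | h0
      · exfalso
        rw [← h0] at hθq
        simp at hθq
      · exact h0
    have hθr := hθmem.2
    have hpt₂ : t₂ < u - θ := by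
      by_contra hno
      push_neg at hno
      have hb1 : ‖y t₂ - y (u - θ)‖ ≤ A * (t₂ - (u - θ)) := by
        apply keyE2 (u - θ) t₂ A (by linarith) (by linarith) (by linarith) hA
        intro s' hs'
        exact hA_before s' (by linarith [hs'.1]) hs'.2
      have hb2 : ‖y u - y t₂‖ ≤ C₁ * |u - t₂| := hC₁ u hu0 (by
        rw [abs_of_pos (by linarith)]
        linarith)
      rw [abs_of_pos (by linarith : (0:ℝ) < u - t₂)] at hb2
      have htri : ‖y (u - θ) - y u‖ ≤ ‖y t₂ - y (u - θ)‖ + ‖y u - y t₂‖ := by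
        have heq : y (u - θ) - y u = -((y t₂ - y (u - θ)) + (y u - y t₂)) := by ring
        rw [heq, norm_neg]
        exact norm_add_le _ _
      have hC₂K : C₂ ≤ ρ * ‖y' u‖ := by nlinarith
      nlinarith
    obtain ⟨ξ, hξmem, hξ⟩ := keyE3 (u - θ) u (by linarith) (by linarith) hu3
    have hfξ : ρ * ‖y' u‖ < ‖y' ξ‖ := by
      rw [norm_sub_rev] at hξ
      have h7 : u - (u - θ) = θ := by ring
      rw [h7] at hξ
      nlinarith
    refine ⟨(ξ, θ), ⟨lt_trans hpt₂ hξmem.1, by linarith [hξmem.2], by linarith [hξmem.2], ?_⟩,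
      hθ0, hpt₂, hξmem.1, hξmem.2, hfξ, hθq⟩
    nlinarith
  obtain ⟨u₀, hu₀1, hu₀2, hu₀3, hu₀4⟩ := hbad δ₁ hδ₁pos C₂
  have step' : ∀ u : ℝ, ∃ vθ : ℝ × ℝ,
      (t₂ < u ∧ u < t₂ + δ₁ ∧ u ≤ tstar + r ∧ C₂ < ‖y' u‖) →
      ((t₂ < vθ.1 ∧ vθ.1 < t₂ + δ₁ ∧ vθ.1 ≤ tstar + r ∧ C₂ < ‖y' vθ.1‖) ∧
        0 < vθ.2 ∧ t₂ < u - vθ.2 ∧ u - vθ.2 < vθ.1 ∧ vθ.1 < u ∧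
        ρ * ‖y' u‖ < ‖y' vθ.1‖ ∧ (ρ * ‖y' u‖) * vθ.2 < ‖y (u - vθ.2) - y u‖) := by
    intro u
    by_cases hu : t₂ < u ∧ u < t₂ + δ₁ ∧ u ≤ tstar + r ∧ C₂ < ‖y' u‖
    · obtain ⟨vθ, hrec⟩ := stepLem u hu.1 hu.2.1 hu.2.2.1 hu.2.2.2
      exact ⟨vθ, fun _ => hrec⟩
    · exact ⟨(0, 0), fun hcontra => absurd hcontra hu⟩
  choose nxt hnxt using step'
  set useq : ℕ → ℝ := fun n => Nat.rec u₀ (fun _ prev => (nxt prev).1) n with huseq_def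
  set θseq : ℕ → ℝ := fun n => (nxt (useq n)).2 with hθseq_def
  have huseqS : ∀ n, useq (n + 1) = (nxt (useq n)).1 := fun n => rfl
  have hGood : ∀ n, t₂ < useq n ∧ useq n < t₂ + δ₁ ∧ useq n ≤ tstar + r ∧ C₂ < ‖y' (useq n)‖ := by
    intro n
    induction n with
    | zero => exact ⟨hu₀1, hu₀2, hu₀3, hu₀4⟩
    | succ n ih => exact (hnxt (useq n) ih).1
  have hRel : ∀ n, 0 < θseq n ∧ t₂ < useq n - θseq n ∧ useq n - θseq n < useq (n + 1) ∧
      useq (n + 1) < useq n ∧ ρ * ‖y' (useq n)‖ < ‖y' (useq (n + 1))‖ ∧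
      (ρ * ‖y' (useq n)‖) * θseq n < ‖y (useq n - θseq n) - y (useq n)‖ :=
    fun n => (hnxt (useq n) (hGood n)).2
  have hanti : ∀ n, useq (n + 1) < useq n := fun n => (hRel n).2.2.2.1
  have hantitone : Antitone useq := antitone_nat_of_succ_le (fun n => (hanti n).le)
  have hbddb : BddBelow (Set.range useq) := by
    refine ⟨t₂, ?_⟩
    rintro w ⟨n, rfl⟩
    exact (hGood n).1.le
  set z := ⨅ n, useq n with hzdef
  have htendz : Tendsto useq atTop (𝓝 z) := tendsto_atTop_ciInf hantitone hbddb
  have hzle : ∀ n, z ≤ useq n := fun n => ciInf_le hbddb n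
  have hzlt : ∀ n, z < useq n := fun n => lt_of_le_of_lt (hzle (n + 1)) (hanti n)
  have hzt₂ : t₂ ≤ z := le_ciInf (fun n => (hGood n).1.le)
  have hgrow : ∀ n, ρ ^ n * C₂ < ‖y' (useq n)‖ := by
    intro n
    induction n with
    | zero => simp only [pow_zero, one_mul]; exact hu₀4
    | succ n ih =>
      have h1 := (hRel n).2.2.2.2.1
      calc ρ ^ (n + 1) * C₂ = ρ * (ρ ^ n * C₂) := by ring
        _ < ρ * ‖y' (useq n)‖ := by nlinarith
        _ < _ := h1
  obtain ⟨C₃, δ₂, hC₃pos, hδ₂pos, hC₃⟩ := hdiffbd z (by linarith)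
  obtain ⟨Y, hY⟩ := IsCompact.exists_bound_of_continuousOn isCompact_Icc hyc
  have hY0 : (0:ℝ) ≤ Y := le_trans (norm_nonneg (y tstar)) (hY tstar ⟨by linarith, by linarith⟩)
  set q : ℝ := ρ⁻¹ with hqdef
  have hq0 : (0:ℝ) < q := by
    rw [hqdef]; positivity
  have hq1 : q < 1 := by
    rw [hqdef]
    exact inv_lt_one_of_one_lt₀ hρ1
  -- choose n₀
  obtain ⟨n₁, hn₁⟩ : ∃ n₁, useq n₁ - z < δ₂ := by
    have := (tendsto_order.1 htendz).2 (z + δ₂) (by linarith)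
    obtain ⟨n₁, hn₁⟩ := this.exists
    exact ⟨n₁, by linarith⟩
  obtain ⟨n₂, hn₂⟩ : ∃ n₂, ∀ n ≥ n₂, max C₃ (2 * Y / δ₂) < ρ ^ (n + 1) := by
    have h1 := tendsto_pow_atTop_atTop_of_one_lt hρ1
    obtain ⟨n₂, hn₂⟩ := (h1.eventually_gt_atTop (max C₃ (2 * Y / δ₂))).exists_forall_of_atTop
    exact ⟨n₂, fun n hn => by
      have := hn₂ (n + 1) (by omega)
      exact this⟩
  obtain ⟨n₃, hn₃⟩ : ∃ n₃, ∀ n ≥ n₃, (2 * C₃ / (1 - q)) * q ^ (n + 1) ≤ 1 / 2 := by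
    have h1 : Tendsto (fun n : ℕ => (2 * C₃ / (1 - q) * q) * q ^ n) atTop (𝓝 0) := by
      have := (tendsto_pow_atTop_nhds_zero_of_lt_one hq0.le hq1).const_mul
        (2 * C₃ / (1 - q) * q)
      simpa using this
    have h2 : ∀ᶠ n : ℕ in atTop, (2 * C₃ / (1 - q) * q) * q ^ n < 1 / 2 :=
      h1.eventually_lt_const (by norm_num)
    obtain ⟨n₃, hn₃⟩ := h2.exists_forall_of_atTop
    refine ⟨n₃, fun n hn => ?_⟩
    have := hn₃ n hn
    have heq : 2 * C₃ / (1 - q) * q ^ (n + 1) = 2 * C₃ / (1 - q) * q * q ^ n := by ring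
    linarith [heq ▸ this]
  set n₀ := max n₁ (max n₂ n₃) with hn₀def
  set a₀ := useq n₀ - z with ha₀def
  have ha₀pos : 0 < a₀ := sub_pos.2 (hzlt n₀)
  have ha₀δ₂ : a₀ < δ₂ := by
    have h1 : useq n₀ ≤ useq n₁ := hantitone (le_max_left _ _)
    rw [ha₀def]
    linarith
  set cc : ℝ := 2 * C₃ / (1 - q) with hccdef
  have hcc0 : 0 < cc := by
    rw [hccdef]
    have : (0:ℝ) < 1 - q := by linarith
    positivity
  have hccq : cc - 2 * C₃ = cc * q := by
    have h1q : (1:ℝ) - q ≠ 0 := ne_of_gt (by linarith)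
    have hq2 : cc * (1 - q) = 2 * C₃ := by
      rw [hccdef, div_mul_cancel₀ _ h1q]
    linear_combination hq2
  have hqρ : ∀ m : ℕ, q ^ m * ρ ^ m = 1 := fun m => by
    rw [hqdef, ← mul_pow, inv_mul_cancel₀ (ne_of_gt hρ0), one_pow]
  clear_value z a₀ q cc
  have hinv : ∀ n, n₀ ≤ n → a₀ * (1 / 2 + cc * q ^ (n + 1)) ≤ useq n - z := by
    intro n hn
    induction n, hn using Nat.le_induction with
    | base =>
      have h1 : cc * q ^ (n₀ + 1) ≤ 1 / 2 := hn₃ n₀ (le_trans (le_max_right _ _)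
        (le_max_right _ _))
      have e1 : a₀ * (cc * q ^ (n₀ + 1)) ≤ a₀ * (1 / 2) :=
        mul_le_mul_of_nonneg_left h1 ha₀pos.le
      rw [← ha₀def]
      linarith only [e1, ha₀pos]
    | succ n hn ih =>
      -- θ bound at index n via case analysis on the witness pair
      have hGn := hGood n
      have hRn := hRel n
      have hKpow : ρ ^ (n + 1) < ρ * ‖y' (useq n)‖ := by
        have e1 : ρ ^ n * 1 ≤ ρ ^ n * C₂ :=
          mul_le_mul_of_nonneg_left hC₂1 (pow_pos hρ0 n).le
        have e2 : ρ * (ρ ^ n * C₂) < ρ * ‖y' (useq n)‖ :=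
          (mul_lt_mul_iff_right₀ hρ0).2 (hgrow n)
        have e3 : ρ * (ρ ^ n * 1) ≤ ρ * (ρ ^ n * C₂) :=
          (mul_le_mul_iff_right₀ hρ0).2 e1
        have e4 : ρ ^ (n + 1) = ρ * (ρ ^ n * 1) := by ring
        rw [e4]
        exact lt_of_le_of_lt e3 e2
      have hKbig : max C₃ (2 * Y / δ₂) < ρ * ‖y' (useq n)‖ :=
        lt_trans (hn₂ n (le_trans (le_trans (le_max_left _ _) (le_max_right n₁ _)) hn)) hKpow
      have hKpos : (0:ℝ) < ρ * ‖y' (useq n)‖ := lt_trans (pow_pos hρ0 (n + 1)) hKpow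
      have han : useq n - z < δ₂ := by
        have h1 : useq n ≤ useq n₀ := hantitone hn
        linarith
      have hanpos : 0 < useq n - z := sub_pos.2 (hzlt n)
      have hpz : z < useq n - θseq n := by
        by_contra hno
        push_neg at hno
        rcases le_or_gt (useq n - θseq n) (z - δ₂) with hb | hb
        · -- far case : contradiction with 2Y bound
          have hθδ : δ₂ ≤ θseq n := by linarith [hzlt n]
          have hybd : ‖y (useq n - θseq n) - y (useq n)‖ ≤ 2 * Y := by
            calc ‖y (useq n - θseq n) - y (useq n)‖
                ≤ ‖y (useq n - θseq n)‖ + ‖y (useq n)‖ := norm_sub_le _ _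
              _ ≤ Y + Y := add_le_add
                  (hY _ ⟨by linarith [hRn.2.1], by linarith [hRn.1, hGn.2.2.1]⟩)
                  (hY _ ⟨by linarith [hGn.1], hGn.2.2.1⟩)
              _ = 2 * Y := by ring
          have hK2 : 2 * Y / δ₂ < ρ * ‖y' (useq n)‖ :=
            lt_of_le_of_lt (le_max_right _ _) hKbig
          rw [div_lt_iff₀ hδ₂pos] at hK2
          have h9 := hRn.2.2.2.2.2
          have e5 : (ρ * ‖y' (useq n)‖) * δ₂ ≤ (ρ * ‖y' (useq n)‖) * θseq n :=
            mul_le_mul_of_nonneg_left hθδ hKpos.le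
          linarith only [e5, hK2, h9, hybd]
        · -- straddle case : contradiction with C₃ bound
          have h7 : ‖y (useq n - θseq n) - y z‖ ≤ C₃ * |useq n - θseq n - z| := by
            apply hC₃ _ (by linarith [hRn.2.1])
            rw [abs_of_nonpos (by linarith)]
            linarith
          rw [abs_of_nonpos (by linarith)] at h7
          have h8 : ‖y (useq n) - y z‖ ≤ C₃ * |useq n - z| := by
            apply hC₃ _ (by linarith [hGn.1])
            rw [abs_of_pos hanpos]
            linarith
          rw [abs_of_pos hanpos] at h8
          have htri : ‖y (useq n - θseq n) - y (useq n)‖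
              ≤ ‖y (useq n - θseq n) - y z‖ + ‖y (useq n) - y z‖ := by
            have heq : y (useq n - θseq n) - y (useq n)
                = (y (useq n - θseq n) - y z) - (y (useq n) - y z) := by ring
            rw [heq]
            exact norm_sub_le _ _
          have hKC₃ : C₃ < ρ * ‖y' (useq n)‖ := lt_of_le_of_lt (le_max_left _ _) hKbig
          have h9 := hRn.2.2.2.2.2
          have e6 : C₃ * θseq n < (ρ * ‖y' (useq n)‖) * θseq n :=
            (mul_lt_mul_iff_left₀ (hRn.1)).2 hKC₃
          linarith only [h7, h8, htri, h9, e6]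
      -- now the pair lies strictly above z
      have hθsmall : (ρ * ‖y' (useq n)‖) * θseq n < 2 * C₃ * (useq n - z) := by
        have h7 : ‖y (useq n - θseq n) - y z‖ ≤ C₃ * |useq n - θseq n - z| := by
          apply hC₃ _ (by linarith [hRn.2.1])
          rw [abs_of_pos (by linarith)]
          linarith [hRn.1]
        rw [abs_of_pos (by linarith)] at h7
        have h8 : ‖y (useq n) - y z‖ ≤ C₃ * |useq n - z| := by
          apply hC₃ _ (by linarith [hGn.1])
          rw [abs_of_pos hanpos]
          linarith
        rw [abs_of_pos hanpos] at h8
        have htri : ‖y (useq n - θseq n) - y (useq n)‖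
            ≤ ‖y (useq n - θseq n) - y z‖ + ‖y (useq n) - y z‖ := by
          have heq : y (useq n - θseq n) - y (useq n)
              = (y (useq n - θseq n) - y z) - (y (useq n) - y z) := by ring
          rw [heq]
          exact norm_sub_le _ _
        have h9 := hRn.2.2.2.2.2
        have e7 : (0:ℝ) < C₃ * θseq n := mul_pos hC₃pos hRn.1
        linarith only [h9, htri, h7, h8, e7]
      have hθqbound : θseq n ≤ 2 * C₃ * a₀ * q ^ (n + 1) := by
        have haa : useq n - z ≤ a₀ := by
          have := hantitone hn
          rw [ha₀def]
          linarith
        have e8 : C₃ * (useq n - z) ≤ C₃ * a₀ := mul_le_mul_of_nonneg_left haa hC₃pos.le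
        have hθa₀ : (ρ * ‖y' (useq n)‖) * θseq n < 2 * C₃ * a₀ := by
          linarith only [hθsmall, e8]
        have hinvpow : q ^ (n + 1) * ρ ^ (n + 1) = 1 := hqρ (n + 1)
        have e9 : q ^ (n + 1) * ρ ^ (n + 1) ≤ q ^ (n + 1) * (ρ * ‖y' (useq n)‖) :=
          mul_le_mul_of_nonneg_left hKpow.le (pow_pos hq0 (n + 1)).le
        have e10 : (1:ℝ) ≤ q ^ (n + 1) * (ρ * ‖y' (useq n)‖) := by
          rw [← hinvpow]
          exact e9
        have e11 : (2 * C₃ * a₀) * 1 ≤ (2 * C₃ * a₀) * (q ^ (n + 1) * (ρ * ‖y' (useq n)‖)) := by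
          apply mul_le_mul_of_nonneg_left e10
          positivity
        have e12 : θseq n * (ρ * ‖y' (useq n)‖) ≤
            (2 * C₃ * a₀ * q ^ (n + 1)) * (ρ * ‖y' (useq n)‖) := by
          ring_nf
          ring_nf at e11 hθa₀
          linarith only [e11, hθa₀]
        exact le_of_mul_le_mul_right e12 hKpos
      have h13 : useq n - θseq n < useq (n + 1) := hRn.2.2.1
      have hstep : a₀ * (1 / 2 + cc * q ^ (n + 1)) - 2 * C₃ * a₀ * q ^ (n + 1)
          = a₀ * (1 / 2 + cc * q ^ (n + 1 + 1)) := by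
        linear_combination (a₀ * q ^ (n + 1)) * hccq
      linarith only [ih, hθqbound, h13, hstep]
  have hfin2 : ∀ᶠ n : ℕ in atTop, a₀ / 2 ≤ useq n - z := by
    rw [eventually_atTop]
    refine ⟨n₀, fun n hn => ?_⟩
    have h1 := hinv n hn
    have e13 : (0:ℝ) ≤ a₀ * (cc * q ^ (n + 1)) :=
      mul_nonneg ha₀pos.le (mul_nonneg hcc0.le (pow_pos hq0 (n + 1)).le)
    linarith only [h1, e13]
  have htend0 : Tendsto (fun n => useq n - z) atTop (𝓝 0) := by
    have := htendz.sub_const z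
    simpa using this
  have hfinal : a₀ / 2 ≤ 0 := ge_of_tendsto htend0 hfin2
  linarith
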